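/- For natural numbers N, n and a weight function w : ℕ → ℝ define F N n w = Σ_{s = 0}^{N} (N.choose s) · 3^s · (Σ_{l = 0}^{N} w l · Σ_{j = 0}^{min s l} (−1)^j · 3^{l − j} · (s.choose j) · ((N − s).choose (l − j)))^n. Then F satisfies the recurrence F (N+1) n w = F N n (fun l => w l + 3 · w (l+1)) + 3 · F N n (fun l => w l − w (l+1)), together with the base case F 0 n w = (w 0)^n. -/

import Mathlib

/-- `F N n w` is `4^{Nn}` times the replicated partition function `Z_{n,N}` of the
Brownian spin cluster, evaluated on the weights `x_s = w s`. -/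
noncomputable def spinClusterF (N n : ℕ) (w : ℕ → ℝ) : ℝ :=
  ∑ s ∈ Finset.range (N + 1), (N.choose s : ℝ) * 3 ^ s *
    (∑ l ∈ Finset.range (N + 1), w l *
        ∑ j ∈ Finset.range (min s l + 1),
          (-1 : ℝ) ^ j * 3 ^ (l - j) * (s.choose j : ℝ) * ((N - s).choose (l - j) : ℝ)) ^ n

open Polynomial Finset

private lemma coeff_one_add_CX_pow (c : ℝ) (m b : ℕ) :
    ((1 + Polynomial.C c * Polynomial.X) ^ m).coeff b = c ^ b * m.choose b := by
  rw [add_comm, add_pow, Polynomial.finset_sum_coeff]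
  have h : ∀ k ∈ Finset.range (m+1),
      ((Polynomial.C c * Polynomial.X) ^ k * 1 ^ (m - k) * (m.choose k : Polynomial ℝ)).coeff b
        = if k = b then c ^ b * m.choose b else 0 := by
    intro k _
    rw [one_pow, mul_one, mul_pow, ← Polynomial.C_pow, mul_comm, ← mul_assoc,
      ← Polynomial.C_eq_natCast, ← Polynomial.C_mul, Polynomial.coeff_C_mul,
      Polynomial.coeff_X_pow]
    by_cases hk : b = k
    · subst hk; simp [mul_comm]
    · simp [hk, Ne.symm hk]
  rw [Finset.sum_congr rfl h, Finset.sum_ite_eq' (Finset.range (m+1)) b]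
  by_cases hb : b ∈ Finset.range (m+1)
  · simp [hb]
  · simp only [hb, if_false]
    rw [Finset.mem_range, not_lt] at hb
    rw [Nat.choose_eq_zero_of_lt hb]
    simp

/-- `cP N s l` is the coefficient of `X^l` in `(1 - X)^s (1 + 3X)^(N-s)`. -/
private noncomputable def cP (N s l : ℕ) : ℝ :=
  (((1 + Polynomial.C (-1:ℝ) * Polynomial.X) ^ s
      * (1 + Polynomial.C (3:ℝ) * Polynomial.X) ^ (N - s)) : Polynomial ℝ).coeff l

private lemma cP_eq_sum (N s l : ℕ) :
    cP N s l = ∑ j ∈ Finset.range (l + 1),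
      (-1 : ℝ) ^ j * 3 ^ (l - j) * (s.choose j : ℝ) * ((N - s).choose (l - j) : ℝ) := by
  rw [cP, Polynomial.coeff_mul, Finset.Nat.sum_antidiagonal_eq_sum_range_succ_mk]
  refine Finset.sum_congr rfl fun j _ => ?_
  rw [coeff_one_add_CX_pow, coeff_one_add_CX_pow]
  ring

private lemma inner_eq (N s l : ℕ) :
    (∑ j ∈ Finset.range (min s l + 1),
      (-1 : ℝ) ^ j * 3 ^ (l - j) * (s.choose j : ℝ) * ((N - s).choose (l - j) : ℝ))
      = cP N s l := by
  rw [cP_eq_sum]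
  refine Finset.sum_subset (by rw [Finset.range_subset_range]; omega) ?_
  intro j hj hj2
  rw [Finset.mem_range] at hj hj2
  rw [Nat.choose_eq_zero_of_lt (show s < j by omega)]
  simp

private lemma cP_vanish (N s l : ℕ) (hs : s ≤ N) (hl : N < l) : cP N s l = 0 := by
  rw [cP_eq_sum]
  refine Finset.sum_eq_zero fun j hj => ?_
  rw [Finset.mem_range] at hj
  by_cases h : j ≤ s
  · rw [Nat.choose_eq_zero_of_lt (show N - s < l - j by omega)]; ring
  · rw [Nat.choose_eq_zero_of_lt (show s < j by omega)]; ring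

private lemma coeff_mul_one_add_CX (p : Polynomial ℝ) (c : ℝ) (l : ℕ) :
    (p * (1 + Polynomial.C c * Polynomial.X)).coeff (l + 1)
      = p.coeff (l + 1) + c * p.coeff l := by
  have : p * (1 + Polynomial.C c * Polynomial.X)
      = p + Polynomial.C c * (p * Polynomial.X) := by ring
  rw [this, Polynomial.coeff_add, Polynomial.coeff_C_mul, Polynomial.coeff_mul_X]

private lemma coeff_mul_one_add_CX_zero (p : Polynomial ℝ) (c : ℝ) :
    (p * (1 + Polynomial.C c * Polynomial.X)).coeff 0 = p.coeff 0 := by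
  have : p * (1 + Polynomial.C c * Polynomial.X)
      = p + Polynomial.C c * (p * Polynomial.X) := by ring
  rw [this, Polynomial.coeff_add, Polynomial.coeff_C_mul, Polynomial.mul_coeff_zero]
  simp

private lemma cP_split_A (N s : ℕ) (hs : s ≤ N) :
    ((1 + Polynomial.C (-1:ℝ) * Polynomial.X) ^ s
        * (1 + Polynomial.C (3:ℝ) * Polynomial.X) ^ (N + 1 - s) : Polynomial ℝ)
      = ((1 + Polynomial.C (-1:ℝ) * Polynomial.X) ^ s
        * (1 + Polynomial.C (3:ℝ) * Polynomial.X) ^ (N - s))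
        * (1 + Polynomial.C (3:ℝ) * Polynomial.X) := by
  rw [show N + 1 - s = (N - s) + 1 by omega, pow_succ]; ring

private lemma cP_A (N s : ℕ) (hs : s ≤ N) (l : ℕ) :
    cP (N + 1) s (l + 1) = cP N s (l + 1) + 3 * cP N s l := by
  rw [cP, cP_split_A N s hs, coeff_mul_one_add_CX]; rfl

private lemma cP_A0 (N s : ℕ) (hs : s ≤ N) : cP (N + 1) s 0 = cP N s 0 := by
  rw [cP, cP_split_A N s hs, coeff_mul_one_add_CX_zero]; rfl

private lemma cP_split_B (N s : ℕ) :
    ((1 + Polynomial.C (-1:ℝ) * Polynomial.X) ^ (s + 1)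
        * (1 + Polynomial.C (3:ℝ) * Polynomial.X) ^ (N + 1 - (s + 1)) : Polynomial ℝ)
      = ((1 + Polynomial.C (-1:ℝ) * Polynomial.X) ^ s
        * (1 + Polynomial.C (3:ℝ) * Polynomial.X) ^ (N - s))
        * (1 + Polynomial.C (-1:ℝ) * Polynomial.X) := by
  rw [show N + 1 - (s + 1) = N - s by omega, pow_succ]; ring

private lemma cP_B (N s l : ℕ) :
    cP (N + 1) (s + 1) (l + 1) = cP N s (l + 1) + (-1) * cP N s l := by
  rw [cP, cP_split_B N s, coeff_mul_one_add_CX]; rfl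

private lemma cP_B0 (N s : ℕ) : cP (N + 1) (s + 1) 0 = cP N s 0 := by
  rw [cP, cP_split_B N s, coeff_mul_one_add_CX_zero]; rfl

/-- Generic step for the inner sum: if `cP (N+1) s' (l+1) = cP N s (l+1) + a * cP N s l`
and the `0`-coefficients agree, the weighted sum transforms. -/
private lemma G_step (N s s' : ℕ) (hs : s ≤ N) (a : ℝ) (w : ℕ → ℝ)
    (h : ∀ l, cP (N + 1) s' (l + 1) = cP N s (l + 1) + a * cP N s l)
    (h0 : cP (N + 1) s' 0 = cP N s 0) :
    (∑ l ∈ Finset.range (N + 2), w l * cP (N + 1) s' l)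
      = ∑ l ∈ Finset.range (N + 1), (w l + a * w (l + 1)) * cP N s l := by
  rw [Finset.sum_range_succ' (fun l => w l * cP (N + 1) s' l) (N + 1)]
  simp only [h, h0]
  have h1 : ∀ l ∈ Finset.range (N + 1),
      w (l + 1) * (cP N s (l + 1) + a * cP N s l)
        = w (l + 1) * cP N s (l + 1) + a * w (l + 1) * cP N s l := fun l _ => by ring
  rw [Finset.sum_congr rfl h1, Finset.sum_add_distrib]
  have h2 : (∑ l ∈ Finset.range (N + 1), w (l + 1) * cP N s (l + 1)) + w 0 * cP N s 0
      = ∑ l ∈ Finset.range (N + 2), w l * cP N s l :=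
    (Finset.sum_range_succ' (fun l => w l * cP N s l) (N + 1)).symm
  have h3 : (∑ l ∈ Finset.range (N + 2), w l * cP N s l)
      = ∑ l ∈ Finset.range (N + 1), w l * cP N s l := by
    rw [Finset.sum_range_succ, cP_vanish N s (N + 1) hs (by omega), mul_zero, add_zero]
  have h4 : (∑ l ∈ Finset.range (N + 1), (w l + a * w (l + 1)) * cP N s l)
      = (∑ l ∈ Finset.range (N + 1), w l * cP N s l)
        + ∑ l ∈ Finset.range (N + 1), a * w (l + 1) * cP N s l := by
    rw [← Finset.sum_add_distrib]
    exact Finset.sum_congr rfl fun l _ => by ring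
  linarith [h2, h3, h4]

private lemma F_eq (N n : ℕ) (w : ℕ → ℝ) :
    spinClusterF N n w = ∑ s ∈ Finset.range (N + 1),
      (N.choose s : ℝ) * 3 ^ s * (∑ l ∈ Finset.range (N + 1), w l * cP N s l) ^ n := by
  unfold spinClusterF
  refine Finset.sum_congr rfl fun s _ => ?_
  congr 1
  congr 1
  exact Finset.sum_congr rfl fun l _ => by rw [inner_eq]

theorem spinClusterF_recurrence (N n : ℕ) (w : ℕ → ℝ) :
    spinClusterF (N + 1) n w
        = spinClusterF N n (fun l => w l + 3 * w (l + 1))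
          + 3 * spinClusterF N n (fun l => w l - w (l + 1))
      ∧ spinClusterF 0 n w = (w 0) ^ n := by
  constructor
  · rw [F_eq, F_eq, F_eq]
    rw [Finset.sum_range_succ'
      (fun s => ((N + 1).choose s : ℝ) * 3 ^ s
        * (∑ l ∈ Finset.range (N + 2), w l * cP (N + 1) s l) ^ n) (N + 1)]
    have hA : ∀ s : ℕ, s ≤ N →
        (∑ l ∈ Finset.range (N + 2), w l * cP (N + 1) s l)
          = ∑ l ∈ Finset.range (N + 1), (w l + 3 * w (l + 1)) * cP N s l :=
      fun s hs => G_step N s s hs 3 w (cP_A N s hs) (cP_A0 N s hs)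
    have hB : ∀ s : ℕ, s ≤ N →
        (∑ l ∈ Finset.range (N + 2), w l * cP (N + 1) (s + 1) l)
          = ∑ l ∈ Finset.range (N + 1), (w l - w (l + 1)) * cP N s l := by
      intro s hs
      rw [G_step N s (s + 1) hs (-1) w (cP_B N s) (cP_B0 N s)]
      exact Finset.sum_congr rfl fun l _ => by ring
    -- split the shifted sum using Pascal's rule
    have hsplit : ∀ s ∈ Finset.range (N + 1),
        ((N + 1).choose (s + 1) : ℝ) * 3 ^ (s + 1)
            * (∑ l ∈ Finset.range (N + 2), w l * cP (N + 1) (s + 1) l) ^ n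
          = 3 * ((N.choose s : ℝ) * 3 ^ s
              * (∑ l ∈ Finset.range (N + 1), (w l - w (l + 1)) * cP N s l) ^ n)
            + (N.choose (s + 1) : ℝ) * 3 ^ (s + 1)
              * (∑ l ∈ Finset.range (N + 2), w l * cP (N + 1) (s + 1) l) ^ n := by
      intro s hs
      rw [Finset.mem_range] at hs
      rw [Nat.choose_succ_succ, hB s (by omega)]
      push_cast
      ring
    rw [Finset.sum_congr rfl hsplit, Finset.sum_add_distrib, ← Finset.mul_sum]
    have hlast : (∑ s ∈ Finset.range (N + 1),
        (N.choose (s + 1) : ℝ) * 3 ^ (s + 1)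
          * (∑ l ∈ Finset.range (N + 2), w l * cP (N + 1) (s + 1) l) ^ n)
        = ∑ s ∈ Finset.range N,
        (N.choose (s + 1) : ℝ) * 3 ^ (s + 1)
          * (∑ l ∈ Finset.range (N + 1), (w l + 3 * w (l + 1)) * cP N (s + 1) l) ^ n := by
      rw [Finset.sum_range_succ, Nat.choose_eq_zero_of_lt (by omega)]
      push_cast
      rw [zero_mul, zero_mul, add_zero]
      exact Finset.sum_congr rfl fun s hs => by
        rw [hA (s + 1) (by rw [Finset.mem_range] at hs; omega)]
    rw [hlast]
    have hfirst : ((N + 1).choose 0 : ℝ) * 3 ^ 0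
        * (∑ l ∈ Finset.range (N + 2), w l * cP (N + 1) 0 l) ^ n
        = (N.choose 0 : ℝ) * 3 ^ 0
          * (∑ l ∈ Finset.range (N + 1), (w l + 3 * w (l + 1)) * cP N 0 l) ^ n := by
      rw [hA 0 (by omega)]; simp
    rw [hfirst]
    have hfin := Finset.sum_range_succ' (fun s => (N.choose s : ℝ) * 3 ^ s
      * (∑ l ∈ Finset.range (N + 1), (w l + 3 * w (l + 1)) * cP N s l) ^ n) N
    linarith [hfin]
  · simp [spinClusterF]
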